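/- For the sequence defined by f_0 = 1 and f_k = (1 - 1/(2k)) f_{k-1} for k ≥ 1, for every integer n ≥ 0 the convolution identity Σ_{k=0}^{n} f_k * f_{n-k} = 1 holds. -/

import Mathlib

/-- For the sequence defined by `f 0 = 1` and `f k = (1 - 1/(2k)) * f (k-1)` for `k ≥ 1`,
for every integer `n ≥ 0` the convolution identity `∑_{k=0}^{n} f k * f (n-k) = 1` holds. -/
theorem fhu_convolution (f : ℕ → ℝ)
    (hf0 : f 0 = 1)
    (hf : ∀ k : ℕ, 1 ≤ k → f k = (1 - 1 / (2 * (k : ℝ))) * f (k - 1)) :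
    ∀ n : ℕ, ∑ k ∈ Finset.range (n + 1), f k * f (n - k) = 1 := by
  have hsym : ∀ m : ℕ, ∑ k ∈ Finset.range (m + 1), (k : ℝ) * (f k * f (m - k))
      = (m : ℝ) / 2 * ∑ k ∈ Finset.range (m + 1), f k * f (m - k) := by
    intro m
    have h1 : ∑ k ∈ Finset.range (m + 1), (k : ℝ) * (f k * f (m - k))
        = ∑ k ∈ Finset.range (m + 1), ((m - k : ℕ) : ℝ) * (f k * f (m - k)) := by
      rw [← Finset.sum_range_reflect (fun k => (k : ℝ) * (f k * f (m - k))) (m + 1)]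
      apply Finset.sum_congr rfl
      intro k hk
      simp only [Finset.mem_range] at hk
      have hk' : k ≤ m := Nat.lt_succ_iff.mp hk
      have : m + 1 - 1 - k = m - k := by omega
      rw [this]
      have : m - (m - k) = k := by omega
      rw [this]
      ring
    have h2 : (∑ k ∈ Finset.range (m + 1), (k : ℝ) * (f k * f (m - k)))
        + (∑ k ∈ Finset.range (m + 1), (k : ℝ) * (f k * f (m - k)))
        = (m : ℝ) * ∑ k ∈ Finset.range (m + 1), f k * f (m - k) := by
      nth_rewrite 2 [h1]
      rw [← Finset.sum_add_distrib, Finset.mul_sum]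
      apply Finset.sum_congr rfl
      intro k hk
      simp only [Finset.mem_range] at hk
      have hk' : k ≤ m := Nat.lt_succ_iff.mp hk
      have hc : ((m - k : ℕ) : ℝ) = (m : ℝ) - (k : ℝ) := by
        rw [Nat.cast_sub hk']
      rw [hc]; ring
    linarith
  intro n
  induction n with
  | zero => simp [hf0]
  | succ n ih =>
    have key : ∑ k ∈ Finset.range (n + 2), (k : ℝ) * (f k * f (n + 1 - k))
        = ((n : ℝ) + 1) / 2 * ∑ k ∈ Finset.range (n + 1), f k * f (n - k) := by
      rw [Finset.sum_range_succ' (fun k => (k : ℝ) * (f k * f (n + 1 - k))) (n + 1)]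
      have step : ∀ j ∈ Finset.range (n + 1),
          ((j + 1 : ℕ) : ℝ) * (f (j + 1) * f (n + 1 - (j + 1)))
          = ((j : ℝ) + 1 / 2) * (f j * f (n - j)) := by
        intro j hj
        have h1 : f (j + 1) = (1 - 1 / (2 * ((j + 1 : ℕ) : ℝ))) * f j := by
          have := hf (j + 1) (Nat.le_add_left 1 j)
          simpa using this
        have h2 : n + 1 - (j + 1) = n - j := by omega
        rw [h1, h2]
        have hj1 : (2 : ℝ) * ((j + 1 : ℕ) : ℝ) ≠ 0 := by
          push_cast; positivity
        push_cast
        field_simp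
        ring
      rw [Finset.sum_congr rfl step]
      have : ∑ j ∈ Finset.range (n + 1), ((j : ℝ) + 1 / 2) * (f j * f (n - j))
          = (∑ j ∈ Finset.range (n + 1), (j : ℝ) * (f j * f (n - j)))
            + 1 / 2 * ∑ j ∈ Finset.range (n + 1), f j * f (n - j) := by
        rw [Finset.mul_sum, ← Finset.sum_add_distrib]
        apply Finset.sum_congr rfl
        intro j hj; ring
      rw [this, hsym n]
      push_cast
      ring
    have hA := hsym (n + 1)
    rw [ih, mul_one] at key
    have hcast : ∑ k ∈ Finset.range (n + 1 + 1), (k : ℝ) * (f k * f (n + 1 - k))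
        = ∑ k ∈ Finset.range (n + 2), (k : ℝ) * (f k * f (n + 1 - k)) := rfl
    rw [hcast, key] at hA
    have hne : ((n : ℝ) + 1) / 2 ≠ 0 := by positivity
    push_cast at hA
    have : ((n : ℝ) + 1) / 2 * ∑ k ∈ Finset.range (n + 1 + 1), f k * f (n + 1 - k)
        = ((n : ℝ) + 1) / 2 * 1 := by
      rw [mul_one, ← hA]
    exact mul_left_cancel₀ hne this
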